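/- Let X be a real inner product space, p ∈ [0,1], and x, y nonzero elements of X. Then α_p[x,y] ≤ 2‖x−y‖/(‖x‖^{1−p} + ‖y‖^{1−p}). -/

import Mathlib

open Real

private lemma alg_key (A B a' b' d : ℝ) (hA : 0 < A) (hB : 0 < B)
    (ha : 0 ≤ a') (hb : 0 ≤ b') (hd : -(a' * b') ≤ d)
    (hkey : a' * B + b' * A ≤ a' * A + b' * B) :
    (a' ^ 2 + b' ^ 2 - 2 * d) * (A + B) ^ 2 ≤
      4 * ((a' * A) ^ 2 + (b' * B) ^ 2 - 2 * (d * (A * B))) := by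
  have h1 : 0 ≤ (d + a' * b') * (A - B) ^ 2 := by
    apply mul_nonneg (by linarith) (sq_nonneg _)
  have h2 : (a' + b') * (A + B) ≤ 2 * (a' * A + b' * B) := by nlinarith
  have h3 : 0 ≤ (a' + b') * (A + B) := by positivity
  nlinarith [mul_le_mul h2 h2 h3 (by positivity), sq_nonneg (a' * A - b' * B)]

theorem pangular_inner {X : Type*} [NormedAddCommGroup X] [InnerProductSpace ℝ X]
    (p : ℝ) (hp : p ∈ Set.Icc (0:ℝ) 1) (x y : X) (hx : x ≠ 0) (hy : y ≠ 0) :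
    ‖(‖x‖ ^ (p - 1)) • x - (‖y‖ ^ (p - 1)) • y‖ ≤
      2 * ‖x - y‖ / (‖x‖ ^ (1 - p) + ‖y‖ ^ (1 - p)) := by
  obtain ⟨hp0, hp1⟩ := hp
  have ha : (0:ℝ) < ‖x‖ := norm_pos_iff.2 hx
  have hb : (0:ℝ) < ‖y‖ := norm_pos_iff.2 hy
  set a := ‖x‖ with ha_def
  set b := ‖y‖ with hb_def
  have hA : (0:ℝ) < a ^ (1 - p) := Real.rpow_pos_of_pos ha _
  have hB : (0:ℝ) < b ^ (1 - p) := Real.rpow_pos_of_pos hb _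
  have hs : (0:ℝ) < a ^ (p - 1) := Real.rpow_pos_of_pos ha _
  have ht : (0:ℝ) < b ^ (p - 1) := Real.rpow_pos_of_pos hb _
  have hap : (0:ℝ) < a ^ p := Real.rpow_pos_of_pos ha _
  have hbp : (0:ℝ) < b ^ p := Real.rpow_pos_of_pos hb _
  have hden : (0:ℝ) < a ^ (1 - p) + b ^ (1 - p) := by positivity
  -- basic rpow identities
  have hsa : a ^ (p - 1) * a = a ^ p := by
    rw [← Real.rpow_add_one ha.ne' (p - 1)]; norm_num
  have htb : b ^ (p - 1) * b = b ^ p := by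
    rw [← Real.rpow_add_one hb.ne' (p - 1)]; norm_num
  have hsA : a ^ (p - 1) * a ^ (1 - p) = 1 := by
    rw [← Real.rpow_add ha]; norm_num
  have htB : b ^ (p - 1) * b ^ (1 - p) = 1 := by
    rw [← Real.rpow_add hb]; norm_num
  have haA : a ^ p * a ^ (1 - p) = a := by
    rw [← Real.rpow_add ha]; norm_num
  have hbB : b ^ p * b ^ (1 - p) = b := by
    rw [← Real.rpow_add hb]; norm_num
  -- key Chebyshev-type inequality
  have hkey : a ^ p * b ^ (1 - p) + b ^ p * a ^ (1 - p) ≤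
      a ^ p * a ^ (1 - p) + b ^ p * b ^ (1 - p) := by
    rcases le_total a b with hab | hab
    · have h1 : a ^ p ≤ b ^ p := Real.rpow_le_rpow ha.le hab hp0
      have h2 : a ^ (1 - p) ≤ b ^ (1 - p) := Real.rpow_le_rpow ha.le hab (by linarith)
      nlinarith
    · have h1 : b ^ p ≤ a ^ p := Real.rpow_le_rpow hb.le hab hp0
      have h2 : b ^ (1 - p) ≤ a ^ (1 - p) := Real.rpow_le_rpow hb.le hab (by linarith)
      nlinarith
  set c : ℝ := inner ℝ x y with hc_def
  have hc : -(a * b) ≤ c := neg_le_of_abs_le (abs_real_inner_le_norm x y)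
  -- norm computations
  have hn1 : ‖(a ^ (p - 1)) • x - (b ^ (p - 1)) • y‖ ^ 2 =
      (a ^ p) ^ 2 + (b ^ p) ^ 2 - 2 * (a ^ (p - 1) * b ^ (p - 1) * c) := by
    rw [norm_sub_sq_real, norm_smul, norm_smul, real_inner_smul_left,
      real_inner_smul_right, Real.norm_eq_abs, Real.norm_eq_abs,
      abs_of_pos hs, abs_of_pos ht]
    rw [mul_pow, mul_pow]
    rw [← hsa, ← htb]
    ring
  have hn2 : ‖x - y‖ ^ 2 = a ^ 2 + b ^ 2 - 2 * c := by
    rw [norm_sub_sq_real]; ring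
  -- reduce to squared inequality
  rw [le_div_iff₀ hden]
  have hL : (0:ℝ) ≤ ‖(a ^ (p - 1)) • x - (b ^ (p - 1)) • y‖ * (a ^ (1 - p) + b ^ (1 - p)) := by
    positivity
  have hR : (0:ℝ) ≤ 2 * ‖x - y‖ := by positivity
  have hsq : (‖(a ^ (p - 1)) • x - (b ^ (p - 1)) • y‖ * (a ^ (1 - p) + b ^ (1 - p))) ^ 2 ≤
      (2 * ‖x - y‖) ^ 2 := by
    have halg := alg_key (a ^ (1 - p)) (b ^ (1 - p)) (a ^ p) (b ^ p)
      (a ^ (p - 1) * b ^ (p - 1) * c) hA hB hap.le hbp.le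
      (by
        have h := mul_le_mul_of_nonneg_left hc (le_of_lt (mul_pos hs ht))
        calc -(a ^ p * b ^ p) = a ^ (p - 1) * b ^ (p - 1) * -(a * b) := by
              rw [← hsa, ← htb]; ring
          _ ≤ a ^ (p - 1) * b ^ (p - 1) * c := h)
      hkey
    have hd : a ^ (p - 1) * b ^ (p - 1) * c * (a ^ (1 - p) * b ^ (1 - p)) = c := by
      calc a ^ (p - 1) * b ^ (p - 1) * c * (a ^ (1 - p) * b ^ (1 - p))
          = (a ^ (p - 1) * a ^ (1 - p)) * (b ^ (p - 1) * b ^ (1 - p)) * c := by ring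
        _ = c := by rw [hsA, htB]; ring
    rw [mul_pow, mul_pow, hn1, hn2]
    rw [haA, hbB] at halg
    rw [hd] at halg
    linarith
  calc ‖(a ^ (p - 1)) • x - (b ^ (p - 1)) • y‖ * (a ^ (1 - p) + b ^ (1 - p))
      = Real.sqrt ((‖(a ^ (p - 1)) • x - (b ^ (p - 1)) • y‖ * (a ^ (1 - p) + b ^ (1 - p))) ^ 2) :=
        (Real.sqrt_sq hL).symm
    _ ≤ Real.sqrt ((2 * ‖x - y‖) ^ 2) := Real.sqrt_le_sqrt hsq
    _ = 2 * ‖x - y‖ := Real.sqrt_sq hR
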